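/- Let L be a real 3×3 matrix with L_{x'|x} ≥ 0 for x' ≠ x and Σ_{x'} L_{x'|x} = 0 for every column x. Set γ₁₀ := (|L_{0|0}| + |L_{1|1}|)/2 and γ₂₁ := (|L_{1|1}| + |L_{2|2}|)/2. Let c₁, c₂ : ℝ → ℝ be differentiable functions satisfying c₁'(t) = −γ₁₀·c₁(t) + √(L_{0|1}L_{1|2})·c₂(t) and c₂'(t) = √(L_{1|0}L_{2|1})·c₁(t) − γ₂₁·c₂(t), with c₁(0) ≥ 0 and c₂(0) = 0. Then c₂(t) ≤ c₁(0)/√2 for all t ≥ 0. (Optimal Markovian coherence transfer for a qutrit with equidistant spectrum cannot exceed the fraction 1/√2.) -/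

import Mathlib

open Real

lemma aux_two_mul_le_exp (x : ℝ) (hx : 0 ≤ x) : 2 * x ≤ Real.exp x := by
  have h := Real.add_one_le_exp (x/2)
  have h2 : Real.exp (x/2) * Real.exp (x/2) = Real.exp x := by
    rw [← Real.exp_add]; ring_nf
  nlinarith [sq_nonneg (x/2 - 1), mul_le_mul h h (by linarith) (Real.exp_pos (x/2)).le]

lemma aux_mul_exp_neg_le (x : ℝ) (hx : 0 ≤ x) : x * Real.exp (-x) ≤ 1/2 := by
  have h := aux_two_mul_le_exp x hx
  have hp := Real.exp_pos (-x)
  have h2 : Real.exp x * Real.exp (-x) = 1 := by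
    rw [← Real.exp_add]; simp
  nlinarith

lemma expDeriv (k x : ℝ) : HasDerivAt (fun τ : ℝ => Real.exp (k * τ)) (k * Real.exp (k * x)) x := by
  exact ((Real.hasDerivAt_exp (k * x)).comp x ((hasDerivAt_id x).const_mul k)).congr_deriv (by ring)

lemma const_of_hasDerivAt_zero {f : ℝ → ℝ} (h : ∀ x, HasDerivAt f 0 x) (x y : ℝ) :
    f x = f y :=
  is_const_of_deriv_eq_zero (fun t => (h t).differentiableAt) (fun t => (h t).deriv) x y

lemma aux_sinh_mono {c d : ℝ} (hd : 0 ≤ d) (hdc : d ≤ c) {t : ℝ} (ht : 0 ≤ t) :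
    c * (Real.exp (d*t) - Real.exp (-(d*t))) ≤ d * (Real.exp (c*t) - Real.exp (-(c*t))) := by
  set g : ℝ → ℝ := fun x => d * (Real.exp (c*x) - Real.exp (-(c*x)))
      - c * (Real.exp (d*x) - Real.exp (-(d*x))) with hg
  have hderiv : ∀ x, HasDerivAt g
      (d * (c * Real.exp (c*x) + c * Real.exp (-(c*x)))
        - c * (d * Real.exp (d*x) + d * Real.exp (-(d*x)))) x := by
    intro x
    have e1 : HasDerivAt (fun x : ℝ => Real.exp (c*x)) (c * Real.exp (c*x)) x := by
      exact ((Real.hasDerivAt_exp (c*x)).comp x ((hasDerivAt_id x).const_mul c)).congr_deriv (by ring)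
    have e2 : HasDerivAt (fun x : ℝ => Real.exp (-(c*x))) (-c * Real.exp (-(c*x))) x := by
      exact ((Real.hasDerivAt_exp (-(c*x))).comp x (((hasDerivAt_id x).const_mul c).neg)).congr_deriv (by ring : _ = -c * Real.exp (-(c*x)))
    have e3 : HasDerivAt (fun x : ℝ => Real.exp (d*x)) (d * Real.exp (d*x)) x := by
      exact ((Real.hasDerivAt_exp (d*x)).comp x ((hasDerivAt_id x).const_mul d)).congr_deriv (by ring)
    have e4 : HasDerivAt (fun x : ℝ => Real.exp (-(d*x))) (-d * Real.exp (-(d*x))) x := by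
      exact ((Real.hasDerivAt_exp (-(d*x))).comp x (((hasDerivAt_id x).const_mul d).neg)).congr_deriv (by ring : _ = -d * Real.exp (-(d*x)))
    have := ((e1.sub e2).const_mul d).sub ((e3.sub e4).const_mul c)
    refine this.congr_deriv ?_; symm
    ring
  have hmono : MonotoneOn g (Set.Ici (0:ℝ)) := by
    apply monotoneOn_of_deriv_nonneg (convex_Ici 0)
    · exact fun x _ => ((hderiv x).differentiableAt.continuousAt).continuousWithinAt
    · exact fun x _ => ((hderiv x).differentiableAt).differentiableWithinAt
    · intro x hx
      rw [(hderiv x).deriv]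
      rw [interior_Ici] at hx
      have hx' : (0:ℝ) ≤ x := le_of_lt hx
      have f1 : (0:ℝ) ≤ Real.exp (c*x) - Real.exp (d*x) := by
        have : d*x ≤ c*x := mul_le_mul_of_nonneg_right hdc hx'
        simpa using Real.exp_le_exp.2 this
      have f2 : (0:ℝ) ≤ 1 - Real.exp (-((c+d)*x)) := by
        have : -((c+d)*x) ≤ 0 := by nlinarith
        simpa using Real.exp_le_one_iff.2 this
      have p1 : Real.exp (c*x) * Real.exp (-((c+d)*x)) = Real.exp (-(d*x)) := by
        rw [← Real.exp_add]; ring_nf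
      have p2 : Real.exp (d*x) * Real.exp (-((c+d)*x)) = Real.exp (-(c*x)) := by
        rw [← Real.exp_add]; ring_nf
      have key := mul_nonneg f1 f2
      have hcd : 0 ≤ c * d := mul_nonneg (hd.trans hdc) hd
      nlinarith [key, hcd, mul_nonneg hcd (by nlinarith [key] :
        (0:ℝ) ≤ Real.exp (c*x) + Real.exp (-(c*x)) - Real.exp (d*x) - Real.exp (-(d*x)))]
  have h0 : g 0 ≤ g t := hmono (Set.self_mem_Ici) ht ht
  have : g 0 = 0 := by simp [hg]
  rw [this] at h0
  simp only [hg] at h0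
  linarith

lemma aux_E_le {c d : ℝ} (hd : 0 ≤ d) (hdc : d ≤ c) (hc : 0 < c) {t : ℝ} (ht : 0 ≤ t) :
    Real.exp (-((c-d)*t)) - Real.exp (-((c+d)*t)) ≤ d / c := by
  have h1 : Real.exp (-((c-d)*t)) = Real.exp (-(c*t)) * Real.exp (d*t) := by
    rw [← Real.exp_add]; ring_nf
  have h2 : Real.exp (-((c+d)*t)) = Real.exp (-(c*t)) * Real.exp (-(d*t)) := by
    rw [← Real.exp_add]; ring_nf
  have hs := aux_sinh_mono hd hdc ht
  have hep := Real.exp_pos (-(c*t))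
  have h3 : Real.exp (-(c*t)) * Real.exp (c*t) = 1 := by rw [← Real.exp_add]; simp
  have h4 : (0:ℝ) < Real.exp (-(c*t)) * Real.exp (-(c*t)) := by positivity
  -- e^{-ct}(e^{dt} - e^{-dt}) ≤ (d/c) e^{-ct}(e^{ct} - e^{-ct}) = (d/c)(1 - e^{-2ct}) ≤ d/c
  rw [h1, h2, div_eq_inv_mul, ← sub_nonneg]
  have expand : Real.exp (-(c*t)) * Real.exp (d*t) - Real.exp (-(c*t)) * Real.exp (-(d*t))
      = Real.exp (-(c*t)) * (Real.exp (d*t) - Real.exp (-(d*t))) := by ring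
  have step : Real.exp (-(c*t)) * (Real.exp (d*t) - Real.exp (-(d*t)))
      ≤ c⁻¹ * d * (1 - Real.exp (-(c*t)) * Real.exp (-(c*t))) := by
    have := mul_le_mul_of_nonneg_left hs hep.le
    have hci : (0:ℝ) < c⁻¹ := by positivity
    calc Real.exp (-(c*t)) * (Real.exp (d*t) - Real.exp (-(d*t)))
        = c⁻¹ * (Real.exp (-(c*t)) * (c * (Real.exp (d*t) - Real.exp (-(d*t))))) := by
          field_simp
      _ ≤ c⁻¹ * (Real.exp (-(c*t)) * (d * (Real.exp (c*t) - Real.exp (-(c*t))))) := by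
          apply mul_le_mul_of_nonneg_left _ hci.le
          exact this
      _ = c⁻¹ * d * (Real.exp (-(c*t)) * Real.exp (c*t) - Real.exp (-(c*t)) * Real.exp (-(c*t))) := by
          ring
      _ = c⁻¹ * d * (1 - Real.exp (-(c*t)) * Real.exp (-(c*t))) := by rw [h3]
  have hfin : c⁻¹ * d * (1 - Real.exp (-(c*t)) * Real.exp (-(c*t))) ≤ c⁻¹ * d := by
    have hcd : (0:ℝ) ≤ c⁻¹ * d := by positivity
    nlinarith
  nlinarith [expand, step, hfin]

open Matrix

set_option maxHeartbeats 1000000 in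
/-- **Optimal Markovian coherence transfer for a qutrit is bounded by `1/√2`.** For any
population transfer rate matrix `L` (3×3, nonnegative off-diagonal entries, zero column
sums), the solution of the optimal covariant Markovian coherence-transfer system
`c₁' = −γ₁₀ c₁ + √(L_{0|1}L_{1|2}) c₂`, `c₂' = √(L_{1|0}L_{2|1}) c₁ − γ₂₁ c₂` with
`c₁(0) ≥ 0` and `c₂(0) = 0` satisfies `c₂(t) ≤ c₁(0)/√2` for all `t ≥ 0`. -/
theorem qutrit_coherence_transfer_bound
    (L : Matrix (Fin 3) (Fin 3) ℝ)
    (hLoff : ∀ x' x, x' ≠ x → 0 ≤ L x' x)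
    (hLcol : ∀ x, ∑ x', L x' x = 0)
    (γ₁₀ γ₂₁ : ℝ)
    (hγ₁₀ : γ₁₀ = (|L 0 0| + |L 1 1|) / 2)
    (hγ₂₁ : γ₂₁ = (|L 1 1| + |L 2 2|) / 2)
    (c₁ c₂ : ℝ → ℝ)
    (hc₁ : ∀ t, HasDerivAt c₁ (-γ₁₀ * c₁ t + Real.sqrt (L 0 1 * L 1 2) * c₂ t) t)
    (hc₂ : ∀ t, HasDerivAt c₂ (Real.sqrt (L 1 0 * L 2 1) * c₁ t - γ₂₁ * c₂ t) t)
    (hc₁0 : 0 ≤ c₁ 0)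
    (hc₂0 : c₂ 0 = 0) :
    ∀ t ≥ (0 : ℝ), c₂ t ≤ c₁ 0 / Real.sqrt 2 := by
  intro t ht
  have hp : 0 ≤ L 0 1 := hLoff 0 1 (by decide)
  have hq : 0 ≤ L 2 1 := hLoff 2 1 (by decide)
  have hr : 0 ≤ L 1 0 := hLoff 1 0 (by decide)
  have hs : 0 ≤ L 1 2 := hLoff 1 2 (by decide)
  have hu : 0 ≤ L 2 0 := hLoff 2 0 (by decide)
  have hv : 0 ≤ L 0 2 := hLoff 0 2 (by decide)
  have h00 : L 0 0 = -(L 1 0 + L 2 0) := by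
    have := hLcol 0; rw [Fin.sum_univ_three] at this; linarith
  have h11 : L 1 1 = -(L 0 1 + L 2 1) := by
    have := hLcol 1; rw [Fin.sum_univ_three] at this; linarith
  have h22 : L 2 2 = -(L 0 2 + L 1 2) := by
    have := hLcol 2; rw [Fin.sum_univ_three] at this; linarith
  have habs0 : |L 0 0| = L 1 0 + L 2 0 := by
    rw [h00, abs_neg, abs_of_nonneg (by linarith)]
  have habs1 : |L 1 1| = L 0 1 + L 2 1 := by
    rw [h11, abs_neg, abs_of_nonneg (by linarith)]
  have habs2 : |L 2 2| = L 0 2 + L 1 2 := by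
    rw [h22, abs_neg, abs_of_nonneg (by linarith)]
  have hα : γ₁₀ = (L 1 0 + L 2 0 + (L 0 1 + L 2 1)) / 2 := by rw [hγ₁₀, habs0, habs1]
  have hβ : γ₂₁ = (L 0 1 + L 2 1 + (L 0 2 + L 1 2)) / 2 := by rw [hγ₂₁, habs1, habs2]
  have hαnn : 0 ≤ γ₁₀ := by rw [hα]; linarith
  have hβnn : 0 ≤ γ₂₁ := by rw [hβ]; linarith
  set a : ℝ := Real.sqrt (L 0 1 * L 1 2) with ha_def
  set b : ℝ := Real.sqrt (L 1 0 * L 2 1) with hb_def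
  have ha : 0 ≤ a := Real.sqrt_nonneg _
  have hb : 0 ≤ b := Real.sqrt_nonneg _
  have hs2 : Real.sqrt 2 * Real.sqrt 2 = 2 := Real.mul_self_sqrt (by norm_num)
  have hs2pos : (0:ℝ) < Real.sqrt 2 := Real.sqrt_pos.2 (by norm_num)
  -- key inequality : √2 b ≤ γ₁₀ + γ₂₁
  have hkey : Real.sqrt 2 * b ≤ γ₁₀ + γ₂₁ := by
    have h2rq : 2 * (L 1 0 * L 2 1) ≤ (γ₁₀ + γ₂₁)^2 := by
      rw [hα, hβ]
      have e1 : 8 * (L 1 0 * L 2 1) ≤ (L 1 0 + 2 * L 2 1)^2 := by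
        nlinarith [sq_nonneg (L 1 0 - 2 * L 2 1)]
      have e2 : (L 1 0 + 2 * L 2 1)^2
          ≤ (L 1 0 + L 2 0 + (L 0 1 + L 2 1) + (L 0 1 + L 2 1 + (L 0 2 + L 1 2)))^2 :=
        pow_le_pow_left₀ (by linarith) (by linarith) 2
      linarith [e1, e2]
    calc Real.sqrt 2 * b = Real.sqrt (2 * (L 1 0 * L 2 1)) := by
          rw [Real.sqrt_mul (by norm_num : (0:ℝ) ≤ 2)]
      _ ≤ Real.sqrt ((γ₁₀ + γ₂₁)^2) := Real.sqrt_le_sqrt h2rq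
      _ = γ₁₀ + γ₂₁ := Real.sqrt_sq (by linarith)
  -- a ≤ γ₂₁ and b ≤ γ₁₀
  have ha' : a ≤ γ₂₁ := by
    have h1 : L 0 1 * L 1 2 ≤ γ₂₁^2 := by
      rw [hβ]
      have e1 : 4 * (L 0 1 * L 1 2) ≤ (L 0 1 + L 1 2)^2 := by
        nlinarith [sq_nonneg (L 0 1 - L 1 2)]
      have e2 : (L 0 1 + L 1 2)^2 ≤ (L 0 1 + L 2 1 + (L 0 2 + L 1 2))^2 :=
        pow_le_pow_left₀ (by linarith) (by linarith) 2
      linarith [e1, e2]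
    calc a ≤ Real.sqrt (γ₂₁^2) := Real.sqrt_le_sqrt h1
      _ = γ₂₁ := Real.sqrt_sq hβnn
  have hb' : b ≤ γ₁₀ := by
    have h1 : L 1 0 * L 2 1 ≤ γ₁₀^2 := by
      rw [hα]
      have e1 : 4 * (L 1 0 * L 2 1) ≤ (L 1 0 + L 2 1)^2 := by
        nlinarith [sq_nonneg (L 1 0 - L 2 1)]
      have e2 : (L 1 0 + L 2 1)^2 ≤ (L 1 0 + L 2 0 + (L 0 1 + L 2 1))^2 :=
        pow_le_pow_left₀ (by linarith) (by linarith) 2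
      linarith [e1, e2]
    calc b ≤ Real.sqrt (γ₁₀^2) := Real.sqrt_le_sqrt h1
      _ = γ₁₀ := Real.sqrt_sq hαnn
  have hab_le : a * b ≤ γ₁₀ * γ₂₁ := by
    calc a * b ≤ γ₂₁ * γ₁₀ := mul_le_mul ha' hb' hb hβnn
      _ = γ₁₀ * γ₂₁ := mul_comm _ _
  set c : ℝ := (γ₁₀ + γ₂₁) / 2 with hc_def
  set e : ℝ := (γ₁₀ - γ₂₁) / 2 with he_def
  have hcnn : 0 ≤ c := by rw [hc_def]; linarith
  have hgsum : γ₁₀ + γ₂₁ = 2 * c := by rw [hc_def]; ring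
  set d : ℝ := Real.sqrt (e^2 + a * b) with hd_def
  have hd2 : d^2 = e^2 + a * b := Real.sq_sqrt (by positivity)
  have hdnn : 0 ≤ d := Real.sqrt_nonneg _
  have hdc : d ≤ c := by
    have h1 : e^2 + a * b ≤ c^2 := by rw [hc_def, he_def]; linarith [hab_le]
    calc d ≤ Real.sqrt (c^2) := Real.sqrt_le_sqrt h1
      _ = c := Real.sqrt_sq hcnn
  have hγα : γ₁₀ = c + e := by rw [hc_def, he_def]; ring
  have hγβ : γ₂₁ = c - e := by rw [hc_def, he_def]; ring
  have hab : a * b = d^2 - e^2 := by rw [hd2]; ring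
  rcases eq_or_lt_of_le hdnn with hd0 | hdpos
  · -- degenerate case d = 0 : e = 0 and a*b = 0
    have hsum0 : e^2 + a * b = 0 := by rw [← hd2, ← hd0]; norm_num
    have he0 : e = 0 := by
      have h1 : e^2 = 0 := by linarith [sq_nonneg e, mul_nonneg ha hb]
      exact pow_eq_zero_iff (by norm_num) |>.1 h1
    have hab0 : a * b = 0 := by
      rw [he0] at hsum0; simpa using hsum0
    rcases mul_eq_zero.1 hab0 with haz | hbz
    · -- a = 0, γ₁₀ = γ₂₁ = c : explicit solution c₂ t = b c₁0 t e^{-ct}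
      have hγ1c : γ₁₀ = c := by rw [hγα, he0, add_zero]
      have hγ2c : γ₂₁ = c := by rw [hγβ, he0, sub_zero]
      have hF1 : ∀ τ, Real.exp (c * τ) * c₁ τ = c₁ 0 := by
        have hder : ∀ τ, HasDerivAt (fun τ => Real.exp (c * τ) * c₁ τ) 0 τ := by
          intro τ
          have := (expDeriv c τ).mul (hc₁ τ)
          refine this.congr_deriv ?_; symm
          rw [haz, hγ1c]; ring
        intro τ
        have := const_of_hasDerivAt_zero hder τ 0
        simpa using this
      have hF2 : Real.exp (c * t) * c₂ t = b * c₁ 0 * t := by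
        have hder : ∀ τ, HasDerivAt (fun τ => Real.exp (c * τ) * c₂ τ - b * c₁ 0 * τ) 0 τ := by
          intro τ
          have hlin : HasDerivAt (fun τ : ℝ => b * c₁ 0 * τ) (b * c₁ 0) τ := by
            simpa using (hasDerivAt_id τ).const_mul (b * c₁ 0)
          have := ((expDeriv c τ).mul (hc₂ τ)).sub hlin
          refine this.congr_deriv ?_; symm
          rw [hγ2c]
          linear_combination (-b) * hF1 τ
        have := const_of_hasDerivAt_zero hder t 0
        simp only [mul_zero, sub_zero] at this
        rw [hc₂0] at this
        simp at this
        linarith [this]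
      have hc2t : c₂ t = b * c₁ 0 * t * Real.exp (-(c * t)) := by
        have hmul : Real.exp (c * t) * Real.exp (-(c * t)) = 1 := by
          rw [← Real.exp_add]; simp
        linear_combination Real.exp (-(c * t)) * hF2 - c₂ t * hmul
      have hb2c : b ≤ Real.sqrt 2 * c := by
        have h1 : Real.sqrt 2 * b ≤ 2 * c := by linarith [hkey, hgsum]
        have h2 := mul_le_mul_of_nonneg_left h1 hs2pos.le
        have h3 : Real.sqrt 2 * (Real.sqrt 2 * b) = 2 * b := by
          rw [← mul_assoc, hs2]
        linarith [h2, h3]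
      have hxe := aux_mul_exp_neg_le (c * t) (mul_nonneg hcnn ht)
      have hte : 0 ≤ t * Real.exp (-(c * t)) := mul_nonneg ht (Real.exp_pos _).le
      calc c₂ t = b * (c₁ 0 * (t * Real.exp (-(c * t)))) := by rw [hc2t]; ring
        _ ≤ (Real.sqrt 2 * c) * (c₁ 0 * (t * Real.exp (-(c * t)))) :=
            mul_le_mul_of_nonneg_right hb2c (mul_nonneg hc₁0 hte)
        _ = (Real.sqrt 2 * c₁ 0) * ((c * t) * Real.exp (-(c * t))) := by ring
        _ ≤ (Real.sqrt 2 * c₁ 0) * (1/2) :=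
            mul_le_mul_of_nonneg_left hxe (mul_nonneg hs2pos.le hc₁0)
        _ = c₁ 0 / Real.sqrt 2 := by
            rw [eq_div_iff (ne_of_gt hs2pos)]
            linear_combination (c₁ 0 / 2) * hs2
    · -- b = 0 : c₂ ≡ 0
      have hder : ∀ τ, HasDerivAt (fun τ => Real.exp (γ₂₁ * τ) * c₂ τ) 0 τ := by
        intro τ
        have := (expDeriv γ₂₁ τ).mul (hc₂ τ)
        refine this.congr_deriv ?_; symm
        rw [hbz]; ring
      have hzero := const_of_hasDerivAt_zero hder t 0
      simp only [mul_zero, Real.exp_zero, one_mul, hc₂0, mul_zero] at hzero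
      have hc2z : c₂ t = 0 := by
        have := Real.exp_pos (γ₂₁ * t)
        have h0 : Real.exp (γ₂₁ * t) * c₂ t = 0 := by simpa using hzero
        rcases mul_eq_zero.1 h0 with h | h
        · exact absurd h (ne_of_gt this)
        · exact h
      rw [hc2z]
      exact div_nonneg hc₁0 hs2pos.le
  · -- main case 0 < d
    have hcpos : 0 < c := lt_of_lt_of_le hdpos hdc
    -- conserved quantity 1
    have hP : ∀ τ, Real.exp ((c - d) * τ) * (b * c₁ τ + (e + d) * c₂ τ) = b * c₁ 0 := by
      have hder : ∀ τ, HasDerivAt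
          (fun τ => Real.exp ((c - d) * τ) * (b * c₁ τ + (e + d) * c₂ τ)) 0 τ := by
        intro τ
        have hinner := ((hc₁ τ).const_mul b).add ((hc₂ τ).const_mul (e + d))
        have := (expDeriv (c - d) τ).mul hinner
        refine this.congr_deriv ?_; symm
        simp only [Pi.add_apply]
        rw [hγα, hγβ]
        linear_combination (-(Real.exp ((c - d) * τ) * c₂ τ)) * hab
      intro τ
      have := const_of_hasDerivAt_zero hder τ 0
      simpa [hc₂0] using this
    -- conserved quantity 2
    have hQ : ∀ τ, Real.exp ((c + d) * τ) * (b * c₁ τ + (e - d) * c₂ τ) = b * c₁ 0 := by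
      have hder : ∀ τ, HasDerivAt
          (fun τ => Real.exp ((c + d) * τ) * (b * c₁ τ + (e - d) * c₂ τ)) 0 τ := by
        intro τ
        have hinner := ((hc₁ τ).const_mul b).add ((hc₂ τ).const_mul (e - d))
        have := (expDeriv (c + d) τ).mul hinner
        refine this.congr_deriv ?_; symm
        simp only [Pi.add_apply]
        rw [hγα, hγβ]
        linear_combination (-(Real.exp ((c + d) * τ) * c₂ τ)) * hab
      intro τ
      have := const_of_hasDerivAt_zero hder τ 0
      simpa [hc₂0] using this
    have m1 : b * c₁ t + (e + d) * c₂ t = Real.exp (-((c - d) * t)) * (b * c₁ 0) := by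
      rw [← hP t, ← mul_assoc, ← Real.exp_add]; simp
    have m2 : b * c₁ t + (e - d) * c₂ t = Real.exp (-((c + d) * t)) * (b * c₁ 0) := by
      rw [← hQ t, ← mul_assoc, ← Real.exp_add]; simp
    have hform : 2 * d * c₂ t
        = (Real.exp (-((c - d) * t)) - Real.exp (-((c + d) * t))) * (b * c₁ 0) := by
      linear_combination m1 - m2
    have hEb : Real.exp (-((c - d) * t)) - Real.exp (-((c + d) * t)) ≤ d / c :=
      aux_E_le hdpos.le hdc hcpos ht
    have hbc10 : 0 ≤ b * c₁ 0 := mul_nonneg hb hc₁0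
    have hA : 2 * d * c₂ t ≤ d / c * (b * c₁ 0) := by
      rw [hform]
      exact mul_le_mul_of_nonneg_right hEb hbc10
    have hA2 : d * (2 * c * c₂ t) ≤ d * (b * c₁ 0) := by
      have h1 := mul_le_mul_of_nonneg_right hA hcpos.le
      have h2 : d / c * (b * c₁ 0) * c = d * (b * c₁ 0) := by field_simp
      calc d * (2 * c * c₂ t) = 2 * d * c₂ t * c := by ring
        _ ≤ d / c * (b * c₁ 0) * c := h1
        _ = d * (b * c₁ 0) := h2
    have hfin : 2 * c * c₂ t ≤ b * c₁ 0 := (mul_le_mul_iff_right₀ hdpos).1 hA2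
    have hstep : (2 * c) * (Real.sqrt 2 * c₂ t) ≤ (2 * c) * c₁ 0 := by
      have s1 := mul_le_mul_of_nonneg_left hfin hs2pos.le
      have s2 := mul_le_mul_of_nonneg_right
        (show Real.sqrt 2 * b ≤ 2 * c by linarith [hkey, hgsum]) hc₁0
      linarith [s1, s2]
    have hdiv := le_of_mul_le_mul_left hstep (by positivity : (0:ℝ) < 2 * c)
    rw [le_div_iff₀ hs2pos]
    linarith [hdiv]
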